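/- For any finite DAG G with at most m sources, there exists a feasible m-machine schedule of minimum makespan σ that admits a proper separator: σ = (S₀ ⊕ σ₀ ⊕ S₁ ⊕ σ₁ ⊕ … ⊕ S_ℓ ⊕ σ_ℓ), where S₀ is the set of sources, and (A) V(σ_i) = succ(S_i) \ (succ[S_{i+1}] ∪ sinks(G)) for all 0 ≤ i ≤ ℓ−1, (B) S_j ⊆ succ(S_i) ∪ sinks(G) for all 0 ≤ i < j ≤ ℓ, and (C) V(σ_ℓ) ⊆ sinks(G). -/

import Mathlib

set_option linter.unusedSectionVars false
set_option linter.unnecessarySimpa false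


/-- A feasible `m`-machine schedule of the job set `X`: a list of timeslots,
each of size at most `m`, pairwise disjoint, covering exactly `X`, such that
whenever `prec u v`, job `u` is scheduled in a strictly earlier timeslot. -/
def IsSchedule {V : Type*} (prec : V → V → Prop) (m : ℕ)
    (X : Finset V) (σ : List (Finset V)) : Prop :=
  (∀ T ∈ σ, T.card ≤ m) ∧
  (∀ v, v ∈ X ↔ ∃ i : Fin σ.length, v ∈ σ.get i) ∧
  (∀ i j : Fin σ.length, i ≠ j → Disjoint (σ.get i) (σ.get j)) ∧
  (∀ i j : Fin σ.length, ∀ u ∈ σ.get i, ∀ v ∈ σ.get j, prec u v → (i : ℕ) < (j : ℕ))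

/-- The set of strict successors of members of `S`. -/
def succSet {V : Type*} (prec : V → V → Prop) (S : Set V) : Set V :=
  {v | ∃ s ∈ S, prec s v}

/-- `S` together with all strict predecessors of members of `S` (`pred[S]`). -/
def predCl {V : Type*} (prec : V → V → Prop) (S : Set V) : Set V :=
  S ∪ {v | ∃ s ∈ S, prec v s}

/-- The sinks of the subgraph induced on `S`: members of `S` with no
successor inside `S`. -/
def sinksIn {V : Type*} (prec : V → V → Prop) (S : Set V) : Set V :=
  {v | v ∈ S ∧ ∀ w ∈ S, ¬ prec v w}

/-- The sinks of the whole DAG: jobs with no successor. -/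
def sinksOf {V : Type*} (prec : V → V → Prop) : Set V :=
  {v | ∀ u, ¬ prec v u}

open Finset List

section
variable {V : Type*} [Fintype V] [DecidableEq V] (prec : V → V → Prop) (m : ℕ)

/-- the timeslot of `f` at time `t` -/
def slotF (f : V → ℕ) (t : ℕ) : Finset V := univ.filter fun v => f v = t

@[simp] lemma mem_slotF {f : V → ℕ} {t : ℕ} {v : V} : v ∈ slotF f t ↔ f v = t := by
  simp [slotF]

/-- schedules as time functions -/
structure Sched (f : V → ℕ) (M : ℕ) : Prop where
  lt : ∀ v, f v < M
  card : ∀ t, (slotF f t).card ≤ m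
  mono : ∀ u v, prec u v → f u < f v

def toListSched (f : V → ℕ) (M : ℕ) : List (Finset V) :=
  List.ofFn fun t : Fin M => slotF f t

lemma toListSched_get (f : V → ℕ) (M : ℕ) (i : Fin (toListSched (V := V) f M).length) :
    (toListSched f M).get i = slotF f i := by
  rw [List.get_eq_getElem]; simp [toListSched]

@[simp] lemma toListSched_length (f : V → ℕ) (M : ℕ) :
    (toListSched (V := V) f M).length = M := by simp [toListSched]

lemma isSchedule_toListSched {f : V → ℕ} {M : ℕ} (h : Sched prec m f M) :
    IsSchedule prec m Finset.univ (toListSched f M) := by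
  refine ⟨?_, ?_, ?_, ?_⟩
  · intro T hT
    simp only [toListSched, List.mem_ofFn] at hT
    obtain ⟨t, rfl⟩ := hT
    exact h.card t
  · intro v
    simp only [Finset.mem_univ, true_iff]
    refine ⟨⟨f v, by simpa using h.lt v⟩, ?_⟩
    rw [toListSched_get]; simp
  · intro i j hij
    rw [toListSched_get, toListSched_get]
    rw [Finset.disjoint_left]
    intro a ha ha'
    rw [mem_slotF] at ha ha'
    exact hij (Fin.ext (by omega))
  · intro i j u hu v hv huv
    rw [toListSched_get, mem_slotF] at hu hv
    have := h.mono u v huv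
    omega

lemma sched_of_isSchedule {τ : List (Finset V)} (h : IsSchedule prec m Finset.univ τ) :
    ∃ f : V → ℕ, Sched prec m f τ.length := by
  classical
  have hex : ∀ v : V, ∃ i : Fin τ.length, v ∈ τ.get i := fun v =>
    (h.2.1 v).mp (Finset.mem_univ v)
  choose g hg using hex
  have huniq : ∀ (v : V) (i : Fin τ.length), v ∈ τ.get i → i = g v := by
    intro v i hi
    by_contra hne
    exact (Finset.disjoint_left.mp (h.2.2.1 i (g v) hne) hi) (hg v)
  refine ⟨fun v => (g v : ℕ), ?_, ?_, ?_⟩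
  · intro v; exact (g v).2
  · intro t
    by_cases ht : t < τ.length
    · refine le_trans (Finset.card_le_card ?_) (h.1 (τ.get ⟨t, ht⟩) (τ.get_mem _))
      intro v hv
      rw [mem_slotF] at hv
      have he : g v = (⟨t, ht⟩ : Fin τ.length) := Fin.ext hv
      exact he ▸ hg v
    · have : slotF (fun v => ((g v : ℕ))) t = ∅ := by
        rw [Finset.eq_empty_iff_forall_notMem]
        intro v hv
        rw [mem_slotF] at hv
        exact ht (hv ▸ (g v).2)
      simp [this]
  · intro u v huv
    exact h.2.2.2 (g u) (g v) u (hg u) v (hg v) huv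

end
section
variable {V : Type*} [Fintype V] [DecidableEq V] {prec : V → V → Prop} {m : ℕ}

/-- height function -/
noncomputable def htf (prec : V → V → Prop) (v : V) : ℕ := {x | prec x v ∨ x = v}.ncard

lemma htf_mono (htrans : Transitive prec) (hirr : Irreflexive prec)
    {u v : V} (h : prec u v) : htf prec u < htf prec v := by
  apply Set.ncard_lt_ncard _ (Set.toFinite _)
  constructor
  · rintro x (hx | rfl)
    · exact Or.inl (htrans hx h)
    · exact Or.inl h
  · intro hsub
    have hv : v ∈ {x | prec x v ∨ x = v} := Or.inr rfl
    rcases hsub hv with hv' | rfl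
    · exact hirr v (htrans hv' h)
    · exact hirr v h

lemma exists_source [Nonempty V] (htrans : Transitive prec) (hirr : Irreflexive prec) :
    ∃ v : V, ∀ u, ¬ prec u v := by
  obtain ⟨v, -, hv⟩ := Finset.exists_min_image Finset.univ (htf prec)
    ⟨Classical.arbitrary V, Finset.mem_univ _⟩
  refine ⟨v, fun u hu => ?_⟩
  exact absurd (hv u (Finset.mem_univ u)) (by simpa using htf_mono htrans hirr hu)

lemma htf_le (v : V) : htf prec v ≤ Fintype.card V := by
  have := Set.ncard_le_ncard (Set.subset_univ {x | prec x v ∨ x = v}) (Set.toFinite _)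
  simpa [Set.ncard_univ, htf] using this

lemma exists_sched [Nonempty V] (htrans : Transitive prec) (hirr : Irreflexive prec)
    (hm : 1 ≤ m) : ∃ M f, Sched prec m f M := by
  classical
  let n := Fintype.card V
  let e := Fintype.equivFin V
  let f : V → ℕ := fun v => htf prec v * n + (e v : ℕ)
  have hstep : ∀ u v : V, htf prec u < htf prec v → f u < f v := by
    intro u v h
    have h2 : (e u : ℕ) < n := (e u).2
    calc f u = htf prec u * n + (e u : ℕ) := rfl
      _ < htf prec u * n + n := by omega
      _ = (htf prec u + 1) * n := by ring
      _ ≤ htf prec v * n := Nat.mul_le_mul_right n h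
      _ ≤ f v := Nat.le_add_right _ _
  have hinj : Function.Injective f := by
    intro u v huv
    rcases lt_trichotomy (htf prec u) (htf prec v) with h | h | h
    · exact absurd huv (by have := hstep u v h; omega)
    · have he : (e u : ℕ) = (e v : ℕ) := by
        have : htf prec u * n + (e u : ℕ) = htf prec v * n + (e v : ℕ) := huv
        rw [h] at this; omega
      exact e.injective (Fin.ext he)
    · exact absurd huv.symm (by have := hstep v u h; omega)
  refine ⟨n * n + n, f, ⟨?_, ?_, fun u v h => hstep u v (htf_mono htrans hirr h)⟩⟩
  · intro v
    have h1 : htf prec v ≤ n := htf_le v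
    have h2 : (e v : ℕ) < n := (e v).2
    have h3 : htf prec v * n ≤ n * n := Nat.mul_le_mul_right n h1
    show htf prec v * n + (e v : ℕ) < n * n + n
    omega
  · intro t
    refine le_trans (Finset.card_le_one.mpr ?_) hm
    intro a ha b hb
    rw [mem_slotF] at ha hb
    exact hinj (by omega)

lemma range'_glue {a b c : ℕ} (h1 : a ≤ b) (h2 : b ≤ c) :
    List.range' a (b - a) ++ List.range' b (c - b) = List.range' a (c - a) := by
  obtain ⟨d, rfl⟩ : ∃ d, b = a + d := ⟨b - a, by omega⟩
  obtain ⟨g, rfl⟩ : ∃ g, c = a + d + g := ⟨c - (a + d), by omega⟩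
  rw [show a + d - a = d by omega, show a + d + g - (a + d) = g by omega,
    List.range'_append_1]
  congr 1
  omega

lemma flatten_ofFn_range' :
    ∀ (k : ℕ) (q : Fin (k + 1) → ℕ), Monotone q →
    (List.ofFn fun i : Fin k =>
        List.range' (q i.castSucc) (q i.succ - q i.castSucc)).flatten
      = List.range' (q 0) (q (Fin.last k) - q 0) := by
  intro k
  induction k with
  | zero =>
    intro q hq
    have : Fin.last 0 = 0 := rfl
    simp [this]
  | succ k ih =>
    intro q hq
    rw [List.ofFn_succ, List.flatten_cons]
    have hmono : Monotone (fun j : Fin (k + 1) => q j.succ) :=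
      fun a b hab => hq (by simpa using hab)
    have h1 := ih (fun j => q j.succ) hmono
    simp only [Fin.succ_castSucc] at h1
    rw [Fin.succ_last] at h1
    rw [h1]
    simp only [Fin.castSucc_zero]
    have h0 : q 0 ≤ q ((0 : Fin (k + 1)).succ) := hq (Fin.zero_le _)
    have h2 : q ((0 : Fin (k + 1)).succ) ≤ q (Fin.last (k + 1)) := hq (Fin.le_last _)
    exact range'_glue h0 h2

end
/-- For every finite DAG with at most `m` sources there exists a feasible
`m`-machine schedule of minimum makespan admitting a proper separator
`σ = S₀ ⊕ σ₀ ⊕ S₁ ⊕ σ₁ ⊕ … ⊕ S_ℓ ⊕ σ_ℓ` with `S₀` the set of sources and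
properties (A), (B), (C). -/
theorem stmt9 {V : Type*} [Fintype V] [DecidableEq V] [Nonempty V]
    (prec : V → V → Prop) (htrans : Transitive prec) (hirr : Irreflexive prec)
    (m : ℕ) (hsrc : {v : V | ∀ u, ¬ prec u v}.ncard ≤ m) :
    ∃ σ : List (Finset V), IsSchedule prec m Finset.univ σ ∧
      (∀ τ : List (Finset V), IsSchedule prec m Finset.univ τ → σ.length ≤ τ.length) ∧
      ∃ (ℓ : ℕ) (S : Fin (ℓ + 1) → Finset V) (seg : Fin (ℓ + 1) → List (Finset V)),
        σ = (List.ofFn fun i : Fin (ℓ + 1) => (S i) :: seg i).flatten ∧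
        (↑(S 0) : Set V) = {v : V | ∀ u, ¬ prec u v} ∧
        (∀ i : Fin ℓ, {v : V | ∃ T ∈ seg i.castSucc, v ∈ T} =
          succSet prec ↑(S i.castSucc) \
            (succSet prec ↑(S i.succ) ∪ ↑(S i.succ) ∪ sinksOf prec)) ∧
        (∀ i j : Fin (ℓ + 1), i < j →
          (↑(S j) : Set V) ⊆ succSet prec ↑(S i) ∪ sinksOf prec) ∧
        {v : V | ∃ T ∈ seg (Fin.last ℓ), v ∈ T} ⊆ sinksOf prec := by
  classical
  -- sources
  set src : Finset V := Finset.univ.filter (fun v => ∀ u, ¬ prec u v) with hsrcdef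
  have hsrccard : src.card ≤ m := by
    have h1 : {v : V | ∀ u, ¬ prec u v}.ncard = src.card := by
      rw [Set.ncard_eq_toFinset_card']
      congr 1
      ext v
      simp [hsrcdef]
    omega
  have hm : 1 ≤ m := by
    obtain ⟨v, hv⟩ := exists_source htrans hirr
    have : v ∈ src := by simp [hsrcdef, hv]
    have := Finset.card_pos.mpr ⟨v, this⟩
    omega
  -- optimum makespan
  have hQ : ∃ M, ∃ f : V → ℕ, Sched prec m f M := exists_sched htrans hirr hm
  set Mopt := Nat.find hQ with hMoptdef
  have hMopt : ∃ f : V → ℕ, Sched prec m f Mopt := Nat.find_spec hQ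
  have hMoptmin : ∀ τ : List (Finset V), IsSchedule prec m Finset.univ τ → Mopt ≤ τ.length :=
    fun τ hτ => Nat.find_le (sched_of_isSchedule prec m hτ)
  obtain ⟨f1, hf1⟩ := hMopt
  have hM1 : 1 ≤ Mopt := lt_of_le_of_lt (Nat.zero_le _) (hf1.lt (Classical.arbitrary V))
  -- normalization: all sources in slot 0
  set PP : (V → ℕ) → Prop :=
    fun f => Sched prec m f Mopt ∧ ∀ v : V, (f v = 0 ↔ ∀ u, ¬ prec u v) with hPPdef
  have hf1pos : ∀ v : V, (∃ u, prec u v) → 1 ≤ f1 v := by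
    rintro v ⟨u, hu⟩
    have := hf1.mono u v hu
    omega
  have hPP1 : PP (fun v => if ∀ u, ¬ prec u v then 0 else f1 v) := by
    constructor
    · refine ⟨?_, ?_, ?_⟩
      · intro v
        by_cases hv : ∀ u, ¬ prec u v <;> simp [hv]
        · omega
        · exact hf1.lt v
      · intro t
        rcases Nat.eq_zero_or_pos t with rfl | ht
        · have : slotF (fun v => if ∀ u, ¬ prec u v then 0 else f1 v) 0 ⊆ src := by
            intro v hv
            rw [mem_slotF] at hv
            by_cases h : ∀ u, ¬ prec u v
            · simp [hsrcdef, h]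
            · exfalso
              simp only [if_neg h] at hv
              push_neg at h
              have := hf1pos v h
              omega
          exact le_trans (Finset.card_le_card this) hsrccard
        · have : slotF (fun v => if ∀ u, ¬ prec u v then 0 else f1 v) t ⊆ slotF f1 t := by
            intro v hv
            rw [mem_slotF] at hv ⊢
            by_cases h : ∀ u, ¬ prec u v
            · simp [h] at hv; omega
            · simpa [h] using hv
          exact le_trans (Finset.card_le_card this) (hf1.card t)
      · intro u v huv
        have hvns : ¬ ∀ w, ¬ prec w v := by push_neg; exact ⟨u, huv⟩
        have hv1 : 1 ≤ f1 v := hf1pos v ⟨u, huv⟩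
        by_cases h : ∀ w, ¬ prec w u <;> simp [h, hvns]
        · omega
        · exact hf1.mono u v huv
    · intro v
      by_cases h : ∀ u, ¬ prec u v <;> simp [h]
      push_neg at h
      have := hf1pos v h
      omega
  -- potential maximization
  set sinkF : Finset V := Finset.univ.filter (fun v => ∀ u, ¬ prec v u) with hsinkFdef
  set Phi : (V → ℕ) → ℕ := fun f => ∑ v ∈ sinkF, f v with hPhidef
  have hSPne : Set.Nonempty {k | ∃ f, PP f ∧ Phi f = k} := ⟨_, _, hPP1, rfl⟩
  have hSPbdd : BddAbove {k | ∃ f, PP f ∧ Phi f = k} := by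
    refine ⟨Fintype.card V * Mopt, ?_⟩
    rintro k ⟨f, hf, rfl⟩
    calc Phi f ≤ ∑ _v ∈ sinkF, Mopt :=
          Finset.sum_le_sum (fun v _ => le_of_lt (hf.1.lt v))
      _ = sinkF.card * Mopt := by rw [Finset.sum_const, smul_eq_mul]
      _ ≤ Fintype.card V * Mopt := by
          have := Finset.card_le_card (Finset.subset_univ sinkF)
          have h2 : (Finset.univ : Finset V).card = Fintype.card V := Finset.card_univ
          exact Nat.mul_le_mul_right _ (by omega)
  obtain ⟨f, hfPP, hPhif⟩ := Nat.sSup_mem hSPne hSPbdd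
  have hmax : ∀ g, PP g → Phi g ≤ Phi f := by
    intro g hg
    rw [hPhif]
    exact le_csSup hSPbdd ⟨g, hg, rfl⟩
  obtain ⟨hsched, hzero⟩ := hfPP
  -- every non-source has a source ancestor at time 0
  have hsrcanc : ∀ v : V, 0 < f v → ∃ a, f a = 0 ∧ prec a v := by
    intro v hv
    have hns : ¬ ∀ u, ¬ prec u v := fun h => by rw [← hzero v] at h; omega
    push_neg at hns
    obtain ⟨a, ha, hmin⟩ := Finset.exists_min_image
      (Finset.univ.filter fun u => prec u v) (htf prec)
      (by obtain ⟨u, hu⟩ := hns; exact ⟨u, by simp [hu]⟩)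
    rw [Finset.mem_filter] at ha
    have hasrc : ∀ u, ¬ prec u a := by
      intro u hu
      have : u ∈ Finset.univ.filter fun u => prec u v := by simp [htrans hu ha.2]
      have h1 := hmin u this
      have h2 := htf_mono htrans hirr hu
      omega
    exact ⟨a, (hzero a).mpr hasrc, ha.2⟩
  -- goodness of positive slots containing a sink (exchange argument)
  have hgood : ∀ t : ℕ, 0 < t → (∃ s, f s = t ∧ ∀ u, ¬ prec s u) →
      ∀ v, (∃ w, prec v w) → t < f v → ∃ a, f a = t ∧ prec a v := by
    rintro t ht ⟨s, hst, hssink⟩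
    by_contra hcon
    push_neg at hcon
    obtain ⟨v0, hv0w, hv0t, hv0no⟩ := hcon
    obtain ⟨v, hvB, hvmin⟩ := Finset.exists_min_image
      (Finset.univ.filter fun v => (∃ w, prec v w) ∧ t < f v ∧ ∀ a, f a = t → ¬ prec a v) f
      ⟨v0, by simp only [Finset.mem_filter, Finset.mem_univ, true_and]
              exact ⟨hv0w, hv0t, hv0no⟩⟩
    rw [Finset.mem_filter] at hvB
    obtain ⟨-, hvw, hvt, hvno⟩ := hvB
    -- all predecessors of v are strictly before t
    have hpred : ∀ u, prec u v → f u < t := by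
      intro u hu
      have huv := hsched.mono u v hu
      rcases lt_trichotomy (f u) t with h | h | h
      · exact h
      · exact absurd hu (hvno u h)
      · exfalso
        have huB : u ∈ Finset.univ.filter
            (fun v => (∃ w, prec v w) ∧ t < f v ∧ ∀ a, f a = t → ¬ prec a v) := by
          refine Finset.mem_filter.mpr ⟨Finset.mem_univ _, ⟨v, hu⟩, h, ?_⟩
          intro a ha hau
          exact hvno a ha (htrans hau hu)
        have := hvmin u huB
        omega
    have hsv : s ≠ v := by
      rintro rfl
      obtain ⟨w, hw⟩ := hvw
      exact hssink w hw
    have hvs : v ≠ s := Ne.symm hsv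
    -- the swapped schedule
    set g : V → ℕ := fun x => if x = s then f v else if x = v then t else f x with hgdef
    have hgs : g s = f v := by simp [hgdef]
    have hgv : g v = t := by simp [hgdef, hvs]
    have hgx : ∀ x, x ≠ s → x ≠ v → g x = f x := by
      intro x h1 h2; simp [hgdef, h1, h2]
    have hPPg : PP g := by
      refine ⟨⟨?_, ?_, ?_⟩, ?_⟩
      · intro x
        by_cases h1 : x = s
        · rw [h1, hgs]; exact hsched.lt v
        · by_cases h2 : x = v
          · rw [h2, hgv]
            have := hsched.lt v; omega
          · rw [hgx x h1 h2]; exact hsched.lt x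
      · intro r
        by_cases hr1 : r = t
        · rw [hr1]
          refine le_trans (Finset.card_le_card_of_injOn (fun x => if x = v then s else x)
            ?_ ?_) (hsched.card t)
          · intro x hx
            rw [Finset.mem_coe, mem_slotF] at hx; rw [Finset.mem_coe]
            by_cases h2 : x = v
            · simp only [h2, if_pos rfl, mem_slotF]; exact hst
            · have h1 : x ≠ s := by
                rintro rfl; rw [hgs] at hx; omega
              simp only [if_neg h2, mem_slotF]
              rw [← hgx x h1 h2]; exact hx
          · intro x hx y hy hxy
            simp only [Finset.mem_coe, mem_slotF] at hx hy
            by_cases h2 : x = v <;> by_cases h3 : y = v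
            · rw [h2, h3]
            · exfalso
              simp only [h2, if_pos rfl, if_neg h3] at hxy
              have h1 : y ≠ s := by
                rintro rfl; rw [hgs] at hy; omega
              exact h1 hxy.symm
            · exfalso
              simp only [h3, if_pos rfl, if_neg h2] at hxy
              have h1 : x ≠ s := by
                rintro rfl; rw [hgs] at hx; omega
              exact h1 hxy
            · simpa [if_neg h2, if_neg h3] using hxy
        · by_cases hr2 : r = f v
          · rw [hr2]
            refine le_trans (Finset.card_le_card_of_injOn (fun x => if x = s then v else x)
              ?_ ?_) (hsched.card (f v))
            · intro x hx
              rw [Finset.mem_coe, mem_slotF] at hx; rw [Finset.mem_coe]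
              by_cases h1 : x = s
              · rw [mem_slotF, h1]; simp
              · have h2 : x ≠ v := by
                  rintro rfl; rw [hgv] at hx; omega
                simp only [if_neg h1, mem_slotF]
                rw [← hgx x h1 h2]; exact hx
            · intro x hx y hy hxy
              simp only [Finset.mem_coe, mem_slotF] at hx hy
              by_cases h1 : x = s <;> by_cases h2 : y = s
              · rw [h1, h2]
              · exfalso
                simp only [h1, if_pos rfl, if_neg h2] at hxy
                have : y ≠ v := by
                  rintro rfl; rw [hgv] at hy; omega
                exact this hxy.symm
              · exfalso
                simp only [h2, if_pos rfl, if_neg h1] at hxy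
                have : x ≠ v := by
                  rintro rfl; rw [hgv] at hx; omega
                exact this hxy
              · simpa [if_neg h1, if_neg h2] using hxy
          · have heq : slotF g r = slotF f r := by
              ext x
              rw [mem_slotF, mem_slotF]
              by_cases h1 : x = s
              · subst h1; rw [hgs]
                constructor <;> intro h <;> omega
              · by_cases h2 : x = v
                · subst h2; rw [hgv]
                  constructor <;> intro h <;> omega
                · rw [hgx x h1 h2]
            rw [heq]; exact hsched.card r
      · intro u w huw
        by_cases h1 : u = s
        · exact absurd huw (h1 ▸ hssink w)
        · by_cases h2 : w = s
          · rw [h2, hgs]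
            by_cases h3 : u = v
            · rw [h3, hgv]; omega
            · rw [hgx u h1 h3]
              have := hsched.mono u s (h2 ▸ huw)
              omega
          · by_cases h3 : u = v
            · have h4 : w ≠ v := by
                intro h
                rw [h3, h] at huw
                exact hirr v huw
              rw [h3, hgv, hgx w h2 h4]
              have := hsched.mono v w (h3 ▸ huw)
              omega
            · by_cases h4 : w = v
              · rw [h4, hgv, hgx u h1 h3]
                exact hpred u (h4 ▸ huw)
              · rw [hgx u h1 h3, hgx w h2 h4]
                exact hsched.mono u w huw
      · intro x
        by_cases h1 : x = s
        · rw [h1, hgs]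
          constructor
          · intro h; omega
          · intro h
            have := (hzero s).mpr h
            omega
        · by_cases h2 : x = v
          · rw [h2, hgv]
            constructor
            · intro h; omega
            · intro h
              have := (hzero v).mpr h
              omega
          · rw [hgx x h1 h2]; exact hzero x
    -- the potential strictly increases: contradiction
    have hsmem : s ∈ sinkF := by
      rw [hsinkFdef, Finset.mem_filter]
      exact ⟨Finset.mem_univ _, hssink⟩
    have hvnot : v ∉ sinkF := by
      intro hmem
      rw [hsinkFdef, Finset.mem_filter] at hmem
      obtain ⟨w, hw⟩ := hvw
      exact hmem.2 w hw
    have hlt : Phi f < Phi g := by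
      show ∑ x ∈ sinkF, f x < ∑ x ∈ sinkF, g x
      rw [← Finset.sum_erase_add sinkF f hsmem, ← Finset.sum_erase_add sinkF g hsmem]
      have hsum : ∑ x ∈ sinkF.erase s, g x = ∑ x ∈ sinkF.erase s, f x := by
        refine Finset.sum_congr rfl ?_
        intro x hx
        have h1 : x ≠ s := (Finset.mem_erase.mp hx).1
        have h2 : x ≠ v := by
          rintro rfl
          exact hvnot (Finset.mem_erase.mp hx).2
        exact hgx x h1 h2
      rw [hsum, hgs, hst]
      omega
    have := hmax g hPPg
    omega
  -- last time a non-sink is scheduled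
  set NS : Finset V := Finset.univ.filter (fun v => ∃ w, prec v w) with hNSdef
  set L : ℕ := NS.sup f with hLdef
  have hLle : ∀ v : V, (∃ w, prec v w) → f v ≤ L := by
    intro v hv
    exact Finset.le_sup (by rw [hNSdef, Finset.mem_filter]; exact ⟨Finset.mem_univ _, hv⟩)
  have hLlt : L < Mopt := by
    rcases NS.eq_empty_or_nonempty with he | hne
    · rw [hLdef, he]; simp; omega
    · obtain ⟨b, hb, heq⟩ := Finset.exists_mem_eq_sup NS hne f
      rw [hLdef, heq]; exact hsched.lt b
  -- goodness of all separator positions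
  have hPgoodgen : ∀ t : ℕ, (t = 0 ∨ t = L ∨ (∃ s, f s = t ∧ ∀ u, ¬ prec s u)) →
      ∀ v, (∃ w, prec v w) → t < f v → ∃ a, f a = t ∧ prec a v := by
    intro t hcase v hv hlt
    rcases hcase with rfl | rfl | hsink
    · exact hsrcanc v hlt
    · exact absurd (hLle v hv) (by omega)
    · rcases Nat.eq_zero_or_pos t with rfl | hpos
      · exact hsrcanc v hlt
      · exact hgood t hpos hsink v hv hlt
  -- separator positions
  set P : Finset ℕ := insert 0 (insert L ((Finset.range Mopt).filter
      (fun t => t ≤ L ∧ ∃ s, f s = t ∧ ∀ u, ¬ prec s u))) with hPdef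
  have hPmem : ∀ t ∈ P, t = 0 ∨ t = L ∨ (∃ s, f s = t ∧ ∀ u, ¬ prec s u) := by
    intro t ht
    rw [hPdef] at ht
    simp only [Finset.mem_insert, Finset.mem_filter, Finset.mem_range] at ht
    rcases ht with rfl | rfl | ⟨-, -, hs⟩
    · exact Or.inl rfl
    · exact Or.inr (Or.inl rfl)
    · exact Or.inr (Or.inr hs)
  have hPle : ∀ t ∈ P, t ≤ L := by
    intro t ht
    rw [hPdef] at ht
    simp only [Finset.mem_insert, Finset.mem_filter, Finset.mem_range] at ht
    rcases ht with rfl | rfl | ⟨-, h, -⟩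
    · omega
    · omega
    · exact h
  have h0P : (0 : ℕ) ∈ P := by rw [hPdef]; simp
  have hLP : L ∈ P := by rw [hPdef]; simp
  have hPsink : ∀ r : ℕ, r ≤ L → (∃ s, f s = r ∧ ∀ u, ¬ prec s u) → r ∈ P := by
    intro r h1 h2
    rw [hPdef]
    simp only [Finset.mem_insert, Finset.mem_filter, Finset.mem_range]
    exact Or.inr (Or.inr ⟨by omega, h1, h2⟩)
  -- the sorted list of separator positions
  set pl : List ℕ := P.sort (· ≤ ·) with hpldef
  have hplS : pl.Pairwise (· < ·) := (Finset.sortedLT_sort P).pairwise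
  have hplmem : ∀ t : ℕ, t ∈ pl ↔ t ∈ P := fun t => Finset.mem_sort _
  have hlpos : 0 < pl.length :=
    List.length_pos_iff.mpr (List.ne_nil_of_mem ((hplmem 0).mpr h0P))
  set ℓ : ℕ := pl.length - 1 with hldef
  have hlen : pl.length = ℓ + 1 := by omega
  set p : Fin (ℓ + 1) → ℕ := fun i => pl.get ⟨i.val, by omega⟩ with hpdef
  have hpmono : StrictMono p := by
    intro i j hij
    exact List.Pairwise.rel_get_of_lt hplS (Fin.mk_lt_mk.mpr (Fin.lt_def.mp hij))
  have hpmem : ∀ i, p i ∈ P := fun i =>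
    (hplmem _).mp (by simp only [hpdef]; exact pl.get_mem _)
  have hmemp : ∀ t ∈ P, ∃ i, p i = t := by
    intro t ht
    obtain ⟨i, hi⟩ := List.mem_iff_get.mp ((hplmem t).mpr ht)
    refine ⟨⟨i.val, by omega⟩, ?_⟩
    simp only [hpdef]
    exact (congrArg pl.get (Fin.ext rfl)).trans hi
  have hp0 : p 0 = 0 := by
    obtain ⟨i, hi⟩ := hmemp 0 h0P
    have h1 : p 0 ≤ p i := hpmono.monotone (Fin.zero_le i)
    omega
  have hpleL : ∀ i, p i ≤ L := fun i => hPle _ (hpmem i)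
  have hplast : p (Fin.last ℓ) = L := by
    obtain ⟨i, hi⟩ := hmemp L hLP
    have h1 : p i ≤ p (Fin.last ℓ) := hpmono.monotone (Fin.le_last i)
    have h2 := hpleL (Fin.last ℓ)
    omega
  -- the extended position function
  set q : Fin (ℓ + 2) → ℕ := fun j => if h : (j : ℕ) < ℓ + 1 then p ⟨j, h⟩ else Mopt
    with hqdef
  have hqcast : ∀ i : Fin (ℓ + 1), q i.castSucc = p i := by
    intro i
    simp only [hqdef]
    have h : ((i.castSucc : Fin (ℓ + 2)) : ℕ) < ℓ + 1 := by simpa using i.2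
    rw [dif_pos h]
    exact congrArg p (Fin.ext (by simp))
  have hqgt : ∀ i : Fin (ℓ + 1), p i < q i.succ := by
    intro i
    simp only [hqdef]
    by_cases h : ((i.succ : Fin (ℓ + 2)) : ℕ) < ℓ + 1
    · rw [dif_pos h]
      apply hpmono
      rw [Fin.lt_def]
      exact Nat.lt_succ_self _
    · rw [dif_neg h]
      have := hpleL i
      omega
  have hqmono : Monotone q := by
    intro a b hab
    simp only [hqdef]
    by_cases hb : (b : ℕ) < ℓ + 1
    · have ha : (a : ℕ) < ℓ + 1 := by
        have := Fin.le_def.mp hab; omega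
      rw [dif_pos ha, dif_pos hb]
      exact hpmono.monotone (Fin.mk_le_mk.mpr (Fin.le_def.mp hab))
    · rw [dif_neg hb]
      by_cases ha : (a : ℕ) < ℓ + 1
      · rw [dif_pos ha]
        have := hpleL ⟨a, ha⟩
        omega
      · rw [dif_neg ha]
  have hq0 : q 0 = 0 := by
    simp only [hqdef]
    rw [dif_pos (show ((0 : Fin (ℓ + 2)) : ℕ) < ℓ + 1 by simp)]
    exact (congrArg p (Fin.ext (by simp))).trans hp0
  have hqlast : q (Fin.last (ℓ + 1)) = Mopt := by
    simp only [hqdef]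
    rw [dif_neg (by simp)]
  have hqsp : ∀ i : Fin ℓ, q (i.castSucc).succ = p i.succ := by
    intro i
    simp only [hqdef]
    have h : ((i.castSucc.succ : Fin (ℓ + 2)) : ℕ) < ℓ + 1 := by
      simp only [Fin.val_succ, Fin.coe_castSucc]
      omega
    rw [dif_pos h]
    exact congrArg p (Fin.ext (by simp))
  -- the schedule and its decomposition
  set σ : List (Finset V) := toListSched f Mopt with hσdef
  set S : Fin (ℓ + 1) → Finset V := fun i => slotF f (p i) with hSdef
  set seg : Fin (ℓ + 1) → List (Finset V) :=
    fun i => (List.range' (p i + 1) (q i.succ - (p i + 1))).map (slotF f) with hsegdef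
  have hcons : ∀ i : Fin (ℓ + 1),
      S i :: seg i = (List.range' (q i.castSucc) (q i.succ - q i.castSucc)).map (slotF f) := by
    intro i
    rw [hqcast]
    have h1 := hqgt i
    rw [show q i.succ - p i = (q i.succ - (p i + 1)) + 1 by omega]
    rw [List.range'_succ, List.map_cons]
  have hflat : σ = (List.ofFn fun i : Fin (ℓ + 1) => S i :: seg i).flatten := by
    have h1 : (List.ofFn fun i : Fin (ℓ + 1) => S i :: seg i) =
        List.map (List.map (slotF f)) (List.ofFn fun i : Fin (ℓ + 1) =>
          List.range' (q i.castSucc) (q i.succ - q i.castSucc)) := by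
      rw [List.map_ofFn]
      congr 1
      funext i
      exact hcons i
    rw [h1, ← List.map_flatten, flatten_ofFn_range' _ q hqmono, hq0, hqlast, Nat.sub_zero]
    rw [hσdef]
    apply List.ext_getElem (by simp [toListSched])
    intro i h1 h2
    simp [toListSched, List.getElem_ofFn, List.getElem_map, List.getElem_range']
  -- membership in the segments
  have hmemseg : ∀ (i : Fin (ℓ + 1)) (v : V),
      (∃ T ∈ seg i, v ∈ T) ↔ (p i + 1 ≤ f v ∧ f v < q i.succ) := by
    intro i v
    have hle := hqgt i
    constructor
    · rintro ⟨T, hT, hvT⟩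
      rw [hsegdef, List.mem_map] at hT
      obtain ⟨r, hr, rfl⟩ := hT
      rw [List.mem_range'_1] at hr
      rw [mem_slotF] at hvT
      omega
    · rintro ⟨h1, h2⟩
      refine ⟨slotF f (f v), ?_, by rw [mem_slotF]⟩
      rw [hsegdef, List.mem_map]
      exact ⟨f v, by rw [List.mem_range'_1]; omega, rfl⟩
  -- no sinks strictly between consecutive separators
  have hnosink : ∀ (i : Fin ℓ) (r : ℕ), p i.castSucc < r → r < p i.succ →
      ∀ x, f x = r → ∃ w, prec x w := by
    intro i r h1 h2 x hx
    by_contra hsink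
    push_neg at hsink
    have hrL : r ≤ L := le_trans (le_of_lt h2) (hpleL i.succ)
    have hrP : r ∈ P := hPsink r hrL ⟨x, hx, hsink⟩
    obtain ⟨k, hk⟩ := hmemp r hrP
    have hik : (i.castSucc : Fin (ℓ+1)) < k := hpmono.lt_iff_lt.mp (by omega)
    have hki : k < (i.succ : Fin (ℓ+1)) := hpmono.lt_iff_lt.mp (by omega)
    rw [Fin.lt_def] at hik hki
    simp only [Fin.coe_castSucc, Fin.val_succ] at hik hki
    omega
  have hSmem : ∀ (j : Fin (ℓ + 1)) (x : V), x ∈ (↑(S j) : Set V) ↔ f x = p j := by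
    intro j x
    rw [hSdef]
    simp [mem_slotF]
  -- assembling everything
  refine ⟨σ, isSchedule_toListSched prec m hsched, ?_, ℓ, S, seg, hflat, ?_, ?_, ?_, ?_⟩
  · intro τ hτ
    rw [hσdef, toListSched_length]
    exact hMoptmin τ hτ
  · ext v
    rw [hSmem 0 v, hp0, Set.mem_setOf_eq, ← hzero v]
  · -- condition (A)
    intro i
    ext v
    rw [Set.mem_setOf_eq, hmemseg, hqsp]
    constructor
    · rintro ⟨h1, h2⟩
      have hvns : ∃ w, prec v w := hnosink i (f v) (by omega) h2 v rfl
      constructor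
      · obtain ⟨a, ha, hav⟩ := hPgoodgen (p i.castSucc) (hPmem _ (hpmem _)) v hvns (by omega)
        exact ⟨a, (hSmem i.castSucc a).mpr ha, hav⟩
      · rintro ((⟨a, haS, hav⟩ | hvS) | hsink)
        · rw [hSmem] at haS
          have := hsched.mono a v hav
          omega
        · rw [hSmem] at hvS
          omega
        · obtain ⟨w, hw⟩ := hvns
          exact hsink w hw
    · rintro ⟨⟨a, haS, hav⟩, hnot⟩
      rw [hSmem] at haS
      have h1 : p i.castSucc < f v := haS ▸ hsched.mono a v hav
      have hvns : ∃ w, prec v w := by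
        by_contra hs
        push_neg at hs
        exact hnot (Or.inr hs)
      have h2 : f v < p i.succ := by
        rcases lt_trichotomy (f v) (p i.succ) with h | h | h
        · exact h
        · exact absurd (Or.inl (Or.inr ((hSmem i.succ v).mpr h))) hnot
        · obtain ⟨b, hb, hbv⟩ := hPgoodgen (p i.succ) (hPmem _ (hpmem _)) v hvns h
          exact absurd (Or.inl (Or.inl ⟨b, (hSmem i.succ b).mpr hb, hbv⟩)) hnot
      exact ⟨by omega, h2⟩
  · -- condition (B)
    intro i j hij v hv
    rw [hSmem] at hv
    by_cases hs : ∀ u, ¬ prec v u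
    · exact Or.inr hs
    · push_neg at hs
      have hlt : p i < f v := by
        rw [hv]
        exact hpmono hij
      obtain ⟨a, ha, hav⟩ := hPgoodgen (p i) (hPmem _ (hpmem _)) v hs hlt
      exact Or.inl ⟨a, (hSmem i a).mpr ha, hav⟩
  · -- condition (C)
    intro v hv
    rw [Set.mem_setOf_eq, hmemseg] at hv
    intro w hw
    have h1 := hLle v ⟨w, hw⟩
    have h2 := hv.1
    rw [hplast] at h2
    omega
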